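/- Let J be a compact interval, ν ∈ (0,1), and let f : J → ℝ be a twice differentiable map with f(J) ⊆ J and 0 < Df(x) ≤ ν for all x ∈ J. If |Nf(x)| ≤ C₁ for all x ∈ J, then for every k ≥ 1 and every x ∈ J, |Nf^k(x)| ≤ C₁/(1 − ν). That is, the nonlinearities of all iterates of f are uniformly bounded in terms of the bound on Nf and ν. -/

import Mathlib

open Set

/-- Uniform bound on the nonlinearities of iterates: if `0 < Df ≤ ν < 1` and `|Nf| ≤ C₁`
on the compact invariant interval `J = [a,b]`, then `|Nf^k| ≤ C₁/(1−ν)` for every `k ≥ 1`.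
Here `Df^k(x) = ∏_{j<k} f'(fʲ(x))` and `d = D²f^k(x)`, so `d / Df^k(x) = Nf^k(x)`. -/
theorem nonlinearity_of_iterates_uniformly_bounded
    (a b ν C₁ : ℝ) (hab : a < b) (hν : ν ∈ Set.Ioo (0:ℝ) 1)
    (f f' f'' : ℝ → ℝ)
    (hmaps : Set.MapsTo f (Set.Icc a b) (Set.Icc a b))
    (hd1 : ∀ x ∈ Set.Icc a b, HasDerivAt f (f' x) x)
    (hd2 : ∀ x ∈ Set.Icc a b, HasDerivAt f' (f'' x) x)
    (hpos : ∀ x ∈ Set.Icc a b, 0 < f' x)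
    (hle : ∀ x ∈ Set.Icc a b, f' x ≤ ν)
    (hN : ∀ x ∈ Set.Icc a b, |f'' x / f' x| ≤ C₁) :
    ∀ k : ℕ, 1 ≤ k → ∀ x ∈ Set.Icc a b,
      HasDerivAt (f^[k]) (∏ j ∈ Finset.range k, f' (f^[j] x)) x ∧
      ∃ d : ℝ,
        HasDerivAt (fun y => ∏ j ∈ Finset.range k, f' (f^[j] y)) d x ∧
        |d / (∏ j ∈ Finset.range k, f' (f^[j] x))| ≤ C₁ / (1 - ν) := by
  obtain ⟨hν0, hν1⟩ := hν
  have hνsub : (0:ℝ) < 1 - ν := by linarith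
  have hC₁ : 0 ≤ C₁ := le_trans (abs_nonneg _) (hN a ⟨le_refl a, hab.le⟩)
  have hiter : ∀ j : ℕ, ∀ x ∈ Set.Icc a b, f^[j] x ∈ Set.Icc a b := by
    intro j x hx
    exact hmaps.iterate j hx
  -- derivative of iterates
  have hDk : ∀ k : ℕ, ∀ x ∈ Set.Icc a b,
      HasDerivAt (f^[k]) (∏ j ∈ Finset.range k, f' (f^[j] x)) x := by
    intro k
    induction k with
    | zero => intro x hx; simpa using hasDerivAt_id x
    | succ n ih =>
      intro x hx
      have h1 := ih x hx
      have h2 := hd1 _ (hiter n x hx)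
      have h3 : HasDerivAt (f ∘ f^[n])
          (f' (f^[n] x) * ∏ j ∈ Finset.range n, f' (f^[j] x)) x := h2.comp x h1
      rw [Function.iterate_succ', Finset.prod_range_succ, mul_comm]
      exact h3
  intro k hk x hx
  refine ⟨hDk k x hx, ?_⟩
  -- derivative of each factor
  have hfac : ∀ j ∈ Finset.range k, HasDerivAt (fun y => f' (f^[j] y))
      (f'' (f^[j] x) * ∏ i ∈ Finset.range j, f' (f^[i] x)) x := by
    intro j _
    exact (hd2 _ (hiter j x hx)).comp x (hDk j x hx)
  have hprod := HasDerivAt.fun_finsetProd hfac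
  set P : ℕ → ℝ := fun j => ∏ i ∈ Finset.range j, f' (f^[i] x) with hP
  set d : ℝ := ∑ j ∈ Finset.range k,
      (∏ i ∈ (Finset.range k).erase j, f' (f^[i] x)) •
        (f'' (f^[j] x) * P j) with hd
  refine ⟨d, hprod, ?_⟩
  have hPpos : ∀ j : ℕ, 0 < P j := by
    intro j
    exact Finset.prod_pos fun i _ => hpos _ (hiter i x hx)
  have hPk := hPpos k
  rw [abs_div, abs_of_pos hPk, div_le_iff₀ hPk]
  have hterm : ∀ j ∈ Finset.range k,
      |(∏ i ∈ (Finset.range k).erase j, f' (f^[i] x)) • (f'' (f^[j] x) * P j)|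
        ≤ (C₁ * ν ^ j) * P k := by
    intro j hj
    have hfj := hpos _ (hiter j x hx)
    have herase : (∏ i ∈ (Finset.range k).erase j, f' (f^[i] x)) * f' (f^[j] x) = P k := by
      exact Finset.prod_erase_mul _ _ hj
    have hPj : P j ≤ ν ^ j := by
      calc P j ≤ ∏ i ∈ Finset.range j, ν :=
            Finset.prod_le_prod (fun i _ => (hpos _ (hiter i x hx)).le)
              (fun i _ => hle _ (hiter i x hx))
        _ = ν ^ j := by simp
    have hNj := hN _ (hiter j x hx)
    have hNj' : |f'' (f^[j] x)| ≤ C₁ * f' (f^[j] x) := by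
      rw [abs_div] at hNj
      rw [abs_of_pos hfj] at hNj
      calc |f'' (f^[j] x)| = |f'' (f^[j] x)| / f' (f^[j] x) * f' (f^[j] x) := by
            field_simp
        _ ≤ C₁ * f' (f^[j] x) := by
            exact mul_le_mul_of_nonneg_right hNj hfj.le
    have hErPos : 0 < ∏ i ∈ (Finset.range k).erase j, f' (f^[i] x) :=
      Finset.prod_pos fun i _ => hpos _ (hiter i x hx)
    rw [smul_eq_mul, abs_mul, abs_mul, abs_of_pos hErPos, abs_of_pos (hPpos j)]
    calc (∏ i ∈ (Finset.range k).erase j, f' (f^[i] x)) * (|f'' (f^[j] x)| * P j)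
        ≤ (∏ i ∈ (Finset.range k).erase j, f' (f^[i] x)) * ((C₁ * f' (f^[j] x)) * ν ^ j) := by
          apply mul_le_mul_of_nonneg_left _ hErPos.le
          exact mul_le_mul hNj' hPj (hPpos j).le (by positivity)
      _ = (C₁ * ν ^ j) * ((∏ i ∈ (Finset.range k).erase j, f' (f^[i] x)) * f' (f^[j] x)) := by
          ring
      _ = (C₁ * ν ^ j) * P k := by rw [herase]
  have habs : |d| ≤ ∑ j ∈ Finset.range k, (C₁ * ν ^ j) * P k := by
    rw [hd]
    exact le_trans (Finset.abs_sum_le_sum_abs _ _) (Finset.sum_le_sum hterm)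
  have hgeom : ∑ j ∈ Finset.range k, ν ^ j ≤ 1 / (1 - ν) := by
    rw [geom_sum_eq (ne_of_lt hν1) k]
    have heq : (ν ^ k - 1) / (ν - 1) = (1 - ν ^ k) / (1 - ν) := by
      rw [div_eq_div_iff (by linarith) (by linarith)]
      ring
    rw [heq]
    have hk' : 1 - ν ^ k ≤ 1 := by nlinarith [pow_nonneg hν0.le k]
    gcongr
  calc |d| ≤ ∑ j ∈ Finset.range k, (C₁ * ν ^ j) * P k := habs
    _ = C₁ * (∑ j ∈ Finset.range k, ν ^ j) * P k := by
        rw [Finset.mul_sum, Finset.sum_mul]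
    _ ≤ C₁ * (1 / (1 - ν)) * P k := by
        apply mul_le_mul_of_nonneg_right _ hPk.le
        exact mul_le_mul_of_nonneg_left hgeom hC₁
    _ = C₁ / (1 - ν) * P k := by ring
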